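/- If B = {b_1,...,b_n} is a strongly reduced basis of a lattice Λ, then ‖b_i‖ = λ_i for all i ∈ {1,2,3,4} (whenever i ≤ n). -/

import Mathlib

open Finset
open scoped RealInnerProductSpace

noncomputable def latticeOf {n : ℕ} (b : Fin n → EuclideanSpace ℝ (Fin n)) :
    AddSubgroup (EuclideanSpace ℝ (Fin n)) := AddSubgroup.closure (Set.range b)

/-- The `i`-th successive minimum of a lattice `L` (with `i ≥ 1`): the least `r ≥ 0`
such that the closed ball of radius `r` contains `i` linearly independent lattice vectors. -/
noncomputable def succMin {n : ℕ} (L : AddSubgroup (EuclideanSpace ℝ (Fin n))) (i : ℕ) : ℝ :=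
  sInf {r : ℝ | 0 ≤ r ∧ ∃ v : Fin i → EuclideanSpace ℝ (Fin n),
    (∀ j, v j ∈ L) ∧ LinearIndependent ℝ v ∧ ∀ j, ‖v j‖ ≤ r}

/-- A basis `b` of the full-rank lattice it generates is *strongly reduced* if
(1) there are linearly independent lattice vectors `v i` realizing the successive minima whose
integer coordinates over `b` have nonzero `i`-th coordinate and vanish beyond `i`, and
(2) each `b i` is shortest in its coset modulo the preceding basis vectors. -/
def StronglyReduced {n : ℕ} (b : Fin n → EuclideanSpace ℝ (Fin n)) : Prop :=
  (∃ v : Fin n → EuclideanSpace ℝ (Fin n), ∃ x : Fin n → Fin n → ℤ,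
    LinearIndependent ℝ v ∧ (∀ i, v i ∈ latticeOf b) ∧
    (∀ i : Fin n, ‖v i‖ = succMin (latticeOf b) ((i : ℕ) + 1)) ∧
    (∀ i, v i = ∑ j, x i j • b j) ∧
    (∀ i, x i i ≠ 0) ∧ (∀ i j, i < j → x i j = 0)) ∧
  (∀ i : Fin n, ∀ c : Fin n → ℤ,
    ‖b i‖ ≤ ‖b i + ∑ j ∈ Finset.univ.filter (· < i), c j • b j‖)

/-! ### Auxiliary lemmas -/

lemma succMin_bddBelow' {n : ℕ} (L : AddSubgroup (EuclideanSpace ℝ (Fin n))) (i : ℕ) :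
    BddBelow {r : ℝ | 0 ≤ r ∧ ∃ v : Fin i → EuclideanSpace ℝ (Fin n),
      (∀ j, v j ∈ L) ∧ LinearIndependent ℝ v ∧ ∀ j, ‖v j‖ ≤ r} :=
  ⟨0, fun _ hr => hr.1⟩

lemma succMin_nonneg' {n : ℕ} (L : AddSubgroup (EuclideanSpace ℝ (Fin n))) (i : ℕ) :
    0 ≤ succMin L i := Real.sInf_nonneg (fun _ hr => hr.1)

lemma succMin_le' {n : ℕ} (L : AddSubgroup (EuclideanSpace ℝ (Fin n))) {i : ℕ} {r : ℝ}
    (hr : 0 ≤ r) (w : Fin i → EuclideanSpace ℝ (Fin n)) (hmem : ∀ j, w j ∈ L)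
    (hind : LinearIndependent ℝ w) (hnorm : ∀ j, ‖w j‖ ≤ r) :
    succMin L i ≤ r :=
  csInf_le (succMin_bddBelow' L i) ⟨hr, w, hmem, hind, hnorm⟩

lemma succMin_mono' {n : ℕ} (L : AddSubgroup (EuclideanSpace ℝ (Fin n))) {a c : ℕ} (hac : a ≤ c)
    (w : Fin c → EuclideanSpace ℝ (Fin n)) (hmem : ∀ j, w j ∈ L)
    (hind : LinearIndependent ℝ w) :
    succMin L a ≤ succMin L c := by
  apply csInf_le_csInf (succMin_bddBelow' L a)
  · refine ⟨∑ j, ‖w j‖, Finset.sum_nonneg (fun j _ => norm_nonneg _), w, hmem, hind, fun j => ?_⟩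
    exact Finset.single_le_sum (fun k _ => norm_nonneg (w k)) (Finset.mem_univ j)
  · rintro r ⟨hr, u, humem, huind, hunorm⟩
    exact ⟨hr, u ∘ Fin.castLE hac, fun j => humem _,
      huind.comp _ (Fin.castLE_injective hac), fun j => hunorm _⟩

/-- Covering bound: every vector of the span of `b_0, …, b_{k-1}` is within squared distance
`(1/4) ∑ ‖b_j‖²` of the integer lattice generated by these vectors. -/
lemma covering' {n : ℕ} (b : Fin n → EuclideanSpace ℝ (Fin n)) :
    ∀ (k : ℕ), k ≤ n → ∀ t ∈ Submodule.span ℝ (b '' {j | (j : ℕ) < k}),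
    ∃ c : Fin n → ℤ,
      ‖t - ∑ j ∈ Finset.univ.filter (fun j : Fin n => (j : ℕ) < k), c j • b j‖ ^ 2
        ≤ (1/4) * ∑ j ∈ Finset.univ.filter (fun j : Fin n => (j : ℕ) < k), ‖b j‖ ^ 2 := by
  intro k
  induction k with
  | zero =>
    intro _ t ht
    refine ⟨0, ?_⟩
    have : (b '' {j : Fin n | (j : ℕ) < 0}) = ∅ := by simp
    rw [this, Submodule.span_empty, Submodule.mem_bot] at ht
    simp [ht]
  | succ k ih =>
    intro hk t ht
    have hkn : k < n := hk
    set K : Fin n := ⟨k, hkn⟩ with hK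
    have hset : (b '' {j : Fin n | (j : ℕ) < k + 1})
        = insert (b K) (b '' {j : Fin n | (j : ℕ) < k}) := by
      ext y
      simp only [Set.mem_image, Set.mem_setOf_eq, Set.mem_insert_iff]
      constructor
      · rintro ⟨j, hj, rfl⟩
        rcases Nat.lt_succ_iff_lt_or_eq.mp hj with h | h
        · exact Or.inr ⟨j, h, rfl⟩
        · exact Or.inl (by rw [show j = K from Fin.ext h])
      · rintro (h | ⟨j, hj, rfl⟩)
        · exact ⟨K, Nat.lt_succ_self k, h.symm⟩
        · exact ⟨j, Nat.lt_succ_of_lt hj, rfl⟩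
    rw [hset, Submodule.mem_span_insert] at ht
    obtain ⟨r, z, hz, rfl⟩ := ht
    set W := Submodule.span ℝ (b '' {j : Fin n | (j : ℕ) < k}) with hW
    set pb : EuclideanSpace ℝ (Fin n) :=
      (W.orthogonalProjectionOnto (b K) : EuclideanSpace ℝ (Fin n)) with hpb
    set β : EuclideanSpace ℝ (Fin n) := b K - pb with hβ
    have hpbW : pb ∈ W := Submodule.coe_mem _
    have hβorth : ∀ w ∈ W, ⟪β, w⟫ = 0 := fun w hw =>
      Submodule.starProjection_inner_eq_zero (b K) w hw
    set c0 : ℤ := round r with hc0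
    set t' : EuclideanSpace ℝ (Fin n) := (r - (c0 : ℝ)) • pb + z with ht'
    have ht'W : t' ∈ W := W.add_mem (W.smul_mem _ hpbW) hz
    obtain ⟨c', hc'⟩ := ih (le_of_lt hkn) t' ht'W
    refine ⟨Function.update c' K c0, ?_⟩
    have hfil : Finset.univ.filter (fun j : Fin n => (j : ℕ) < k + 1)
        = insert K (Finset.univ.filter (fun j : Fin n => (j : ℕ) < k)) := by
      ext j
      simp only [mem_filter, mem_univ, true_and, mem_insert]
      rw [Nat.lt_succ_iff_lt_or_eq]
      constructor
      · rintro (h | h)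
        · exact Or.inr h
        · exact Or.inl (Fin.ext h)
      · rintro (rfl | h)
        · exact Or.inr rfl
        · exact Or.inl h
    have hKnot : K ∉ Finset.univ.filter (fun j : Fin n => (j : ℕ) < k) := by simp [hK]
    rw [hfil, Finset.sum_insert hKnot]
    have hsum : ∑ j ∈ Finset.univ.filter (fun j : Fin n => (j : ℕ) < k),
        (Function.update c' K c0) j • b j
        = ∑ j ∈ Finset.univ.filter (fun j : Fin n => (j : ℕ) < k), c' j • b j := by
      apply Finset.sum_congr rfl
      intro j hj
      have : j ≠ K := by
        simp only [mem_filter] at hj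
        exact Fin.ne_of_val_ne (Nat.ne_of_lt hj.2)
      rw [Function.update_of_ne this]
    rw [Function.update_self, hsum]
    have hdecomp : r • b K + z - (c0 • b K +
          ∑ j ∈ Finset.univ.filter (fun j : Fin n => (j : ℕ) < k), c' j • b j)
        = (r - (c0:ℝ)) • β +
          (t' - ∑ j ∈ Finset.univ.filter (fun j : Fin n => (j : ℕ) < k), c' j • b j) := by
      have : (c0 : ℤ) • b K = (c0 : ℝ) • b K := by
        simp [Int.cast_smul_eq_zsmul ℝ]
      rw [this, ht', hβ]
      module
    rw [hdecomp]
    have hw2 : (t' - ∑ j ∈ Finset.univ.filter (fun j : Fin n => (j : ℕ) < k), c' j • b j)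
        ∈ W := by
      apply W.sub_mem ht'W
      apply Submodule.sum_mem
      intro j hj
      simp only [mem_filter, mem_univ, true_and] at hj
      exact W.smul_of_tower_mem _ (Submodule.subset_span ⟨j, hj, rfl⟩)
    have hinner : ⟪(r - (c0:ℝ)) • β,
        t' - ∑ j ∈ Finset.univ.filter (fun j : Fin n => (j : ℕ) < k), c' j • b j⟫ = 0 := by
      rw [real_inner_smul_left, hβorth _ hw2, mul_zero]
    rw [norm_add_sq_real, hinner, mul_zero, add_zero]
    have hβle : ‖β‖ ≤ ‖b K‖ := by
      have h1 : ‖b K‖ ^ 2 = ‖β‖ ^ 2 + ‖pb‖ ^ 2 := by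
        have : b K = β + pb := by rw [hβ]; abel
        rw [this, norm_add_sq_real, hβorth _ hpbW, mul_zero, add_zero]
      nlinarith [norm_nonneg β, norm_nonneg (b K), norm_nonneg pb]
    have hr2 : (r - (c0:ℝ)) ^ 2 ≤ 1/4 := by
      have := abs_sub_round r
      rw [← hc0] at this
      nlinarith [abs_nonneg (r - (c0:ℝ)), sq_abs (r - (c0:ℝ))]
    have h1 : ‖(r - (c0:ℝ)) • β‖ ^ 2 ≤ (1/4) * ‖b K‖ ^ 2 := by
      rw [norm_smul, Real.norm_eq_abs, mul_pow, sq_abs]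
      nlinarith [norm_nonneg β, sq_nonneg (r - (c0:ℝ))]
    rw [Finset.sum_insert hKnot]
    linarith [hc', h1]

lemma vmem_span' {n : ℕ} (b : Fin n → EuclideanSpace ℝ (Fin n))
    (v : Fin n → EuclideanSpace ℝ (Fin n)) (x : Fin n → Fin n → ℤ)
    (hvx : ∀ i, v i = ∑ j, x i j • b j) (hx0 : ∀ i j, i < j → x i j = 0)
    {K i : Fin n} (hKi : K < i) :
    v K ∈ Submodule.span ℝ (b '' {j : Fin n | j < i}) := by
  rw [hvx K]
  apply Submodule.sum_mem
  intro k _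
  by_cases hk : k < i
  · exact Submodule.smul_of_tower_mem _ _ (Submodule.subset_span ⟨k, hk, rfl⟩)
  · have : K < k := lt_of_lt_of_le hKi (not_lt.mp hk)
    rw [hx0 K k this, zero_smul]
    exact Submodule.zero_mem _

/-- Lower bound: every basis vector of a basis admitting a triangular system of
minima-attaining vectors has norm at least the corresponding successive minimum. -/
lemma succMin_le_norm' {n : ℕ} (b : Fin n → EuclideanSpace ℝ (Fin n))
    (hli : LinearIndependent ℝ b)
    (v : Fin n → EuclideanSpace ℝ (Fin n)) (x : Fin n → Fin n → ℤ)
    (hvind : LinearIndependent ℝ v) (hvmem : ∀ i, v i ∈ latticeOf b)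
    (hvnorm : ∀ i : Fin n, ‖v i‖ = succMin (latticeOf b) ((i : ℕ) + 1))
    (hvx : ∀ i, v i = ∑ j, x i j • b j) (hx0 : ∀ i j, i < j → x i j = 0)
    (i : Fin n) : succMin (latticeOf b) ((i : ℕ) + 1) ≤ ‖b i‖ := by
  classical
  by_contra hcon
  push_neg at hcon
  have hQ : ∃ m : ℕ, ‖b i‖ < succMin (latticeOf b) (m + 1) := ⟨(i : ℕ), hcon⟩
  set m := Nat.find hQ with hm
  have hspec : ‖b i‖ < succMin (latticeOf b) (m + 1) := Nat.find_spec hQ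
  have hmle : m ≤ (i : ℕ) := Nat.find_le hcon
  have hmin : ∀ j, j < m → succMin (latticeOf b) (j + 1) ≤ ‖b i‖ := by
    intro j hj
    have := Nat.find_min hQ hj
    linarith [not_lt.mp this]
  have hmn : m ≤ n := le_trans hmle (le_of_lt i.isLt)
  set u : Fin (m + 1) → EuclideanSpace ℝ (Fin n) :=
    Fin.snoc (fun j : Fin m => v (Fin.castLE hmn j)) (b i) with hu
  have humem : ∀ j, u j ∈ latticeOf b := by
    intro j
    induction j using Fin.lastCases with
    | last => rw [hu]; simp only [Fin.snoc_last]; exact AddSubgroup.subset_closure ⟨i, rfl⟩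
    | cast j => rw [hu]; simp only [Fin.snoc_castSucc]; exact hvmem _
  have hW : ∀ j : Fin m, v (Fin.castLE hmn j) ∈ Submodule.span ℝ (b '' {j : Fin n | j < i}) := by
    intro j
    apply vmem_span' b v x hvx hx0
    rw [Fin.lt_def]
    exact lt_of_lt_of_le (by simp) hmle
  have huind : LinearIndependent ℝ u := by
    rw [hu, linearIndependent_fin_snoc]
    refine ⟨hvind.comp _ (Fin.castLE_injective hmn), ?_⟩
    intro hbi
    have h1 : Submodule.span ℝ (Set.range fun j : Fin m => v (Fin.castLE hmn j))
        ≤ Submodule.span ℝ (b '' {j : Fin n | j < i}) := by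
      rw [Submodule.span_le]
      rintro _ ⟨j, rfl⟩
      exact hW j
    exact hli.notMem_span_image (s := {j : Fin n | j < i}) (lt_irrefl i) (h1 hbi)
  have hunorm : ∀ j, ‖u j‖ ≤ ‖b i‖ := by
    intro j
    induction j using Fin.lastCases with
    | last => rw [hu]; simp only [Fin.snoc_last]; exact le_refl _
    | cast j =>
      rw [hu]; simp only [Fin.snoc_castSucc]
      rw [hvnorm]
      exact hmin _ (by simp)
  exact absurd (succMin_le' (latticeOf b) (norm_nonneg (b i)) u humem huind hunorm)
    (not_le.mpr hspec)

/-- Upper bound: the first four vectors of a strongly reduced basis have norm at most the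
corresponding successive minimum. -/
lemma norm_le_succMin' {n : ℕ} (b : Fin n → EuclideanSpace ℝ (Fin n))
    (hli : LinearIndependent ℝ b) (hsr : StronglyReduced b) :
    ∀ m : ℕ, m < 4 → ∀ i : Fin n, (i : ℕ) = m → ‖b i‖ ≤ succMin (latticeOf b) ((i : ℕ) + 1) := by
  obtain ⟨⟨v, x, hvind, hvmem, hvnorm, hvx, hxne, hx0⟩, cond2⟩ := hsr
  intro m
  induction m using Nat.strong_induction_on with
  | _ m IH =>
  intro hm4 i him
  set L := latticeOf b with hL
  set lam := succMin L ((i : ℕ) + 1) with hlam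
  have hlam0 : 0 ≤ lam := succMin_nonneg' L _
  have hsplit : v i = x i i • b i + ∑ j ∈ Finset.univ.filter (· < i), x i j • b j := by
    rw [hvx i]
    rw [← Finset.sum_subset (Finset.subset_univ (insert i (Finset.univ.filter (· < i))))
      (by
        intro j _ hj
        simp only [Finset.mem_insert, Finset.mem_filter, Finset.mem_univ, true_and] at hj
        push_neg at hj
        have : i < j := lt_of_le_of_ne hj.2 (Ne.symm hj.1)
        rw [hx0 i j this, zero_smul])]
    rw [Finset.sum_insert (by simp)]
  by_cases h1 : x i i = 1
  · calc ‖b i‖ ≤ ‖b i + ∑ j ∈ Finset.univ.filter (· < i), x i j • b j‖ := cond2 i (x i)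
      _ = ‖v i‖ := by rw [hsplit, h1, one_smul]
      _ = lam := hvnorm i
  by_cases h2 : x i i = -1
  · calc ‖b i‖ ≤ ‖b i + ∑ j ∈ Finset.univ.filter (· < i), (-(x i j)) • b j‖ :=
        cond2 i (fun j => -(x i j))
      _ = ‖-(v i)‖ := by
          congr 1
          rw [hsplit, h2]
          rw [Finset.sum_congr rfl (fun j _ => neg_smul (x i j) (b j))]
          simp only [neg_add_rev, neg_smul, neg_neg, one_smul, ← Finset.sum_neg_distrib]
          abel
      _ = ‖v i‖ := norm_neg _
      _ = lam := hvnorm i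
  -- now |x i i| ≥ 2
  have hx2 : 2 ≤ |x i i| := by
    have := hxne i
    rcases abs_cases (x i i) with ⟨ha, _⟩ | ⟨ha, _⟩ <;> omega
  have hxR : (4 : ℝ) ≤ ((x i i : ℝ)) ^ 2 := by
    have h2' : (2 : ℝ) ≤ |(x i i : ℝ)| := by
      rw [← Int.cast_abs]
      exact_mod_cast hx2
    nlinarith [sq_abs ((x i i : ℝ)), abs_nonneg ((x i i : ℝ))]
  set W := Submodule.span ℝ (b '' {j : Fin n | j < i}) with hWdef
  set pb : EuclideanSpace ℝ (Fin n) :=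
    (W.orthogonalProjectionOnto (b i) : EuclideanSpace ℝ (Fin n)) with hpb
  set β : EuclideanSpace ℝ (Fin n) := b i - pb with hβ
  have hpbW : pb ∈ W := Submodule.coe_mem _
  have hβorth : ∀ w ∈ W, ⟪β, w⟫ = 0 := fun w hw =>
    Submodule.starProjection_inner_eq_zero (b i) w hw
  set s : EuclideanSpace ℝ (Fin n) := ∑ j ∈ Finset.univ.filter (· < i), x i j • b j with hs
  have hsW : s ∈ W := by
    apply Submodule.sum_mem
    intro j hj
    simp only [mem_filter, mem_univ, true_and] at hj
    exact W.smul_of_tower_mem _ (Submodule.subset_span ⟨j, hj, rfl⟩)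
  -- Fact A : 4‖β‖² ≤ λ²
  have hA : 4 * ‖β‖ ^ 2 ≤ lam ^ 2 := by
    have hcast : x i i • b i = ((x i i : ℝ)) • b i := (Int.cast_smul_eq_zsmul ℝ _ _).symm
    have hv2 : v i = ((x i i : ℝ)) • β + (((x i i : ℝ)) • pb + s) := by
      rw [hsplit, hcast, hβ]
      module
    have hmem : ((x i i : ℝ)) • pb + s ∈ W := W.add_mem (W.smul_mem _ hpbW) hsW
    have hnormsq : ‖v i‖ ^ 2 = ((x i i : ℝ)) ^ 2 * ‖β‖ ^ 2 + ‖((x i i : ℝ)) • pb + s‖ ^ 2 := by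
      rw [hv2, norm_add_sq_real, real_inner_smul_left, hβorth _ hmem, mul_zero, mul_zero,
        add_zero, norm_smul, Real.norm_eq_abs, mul_pow, sq_abs]
    have hnv : ‖v i‖ = lam := hvnorm i
    rw [hnv] at hnormsq
    nlinarith [norm_nonneg (((x i i : ℝ)) • pb + s), sq_nonneg ‖β‖, norm_nonneg β]
  -- covering bound
  have hWeq : (b '' {j : Fin n | j < i}) = (b '' {j : Fin n | (j : ℕ) < (i : ℕ)}) := rfl
  obtain ⟨c, hc⟩ := covering' b (i : ℕ) (le_of_lt i.isLt) pb (by rw [hWdef, hWeq] at hpbW; exact hpbW)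
  have hfe : Finset.univ.filter (· < i)
      = Finset.univ.filter (fun j : Fin n => (j : ℕ) < (i : ℕ)) := by
    apply Finset.filter_congr
    intro j _
    rw [Fin.lt_def]
  set q : EuclideanSpace ℝ (Fin n) :=
    pb - ∑ j ∈ Finset.univ.filter (fun j : Fin n => (j : ℕ) < (i : ℕ)), c j • b j with hq
  have hqW : q ∈ W := by
    apply W.sub_mem hpbW
    apply Submodule.sum_mem
    intro j hj
    simp only [mem_filter, mem_univ, true_and] at hj
    exact W.smul_of_tower_mem _ (Submodule.subset_span ⟨j, Fin.lt_def.mpr hj, rfl⟩)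
  have hdec : b i + ∑ j ∈ Finset.univ.filter (· < i), (-(c j)) • b j = β + q := by
    rw [hfe, hq, hβ]
    rw [Finset.sum_congr rfl (fun j _ => neg_smul (c j) (b j))]
    rw [Finset.sum_neg_distrib]
    abel
  have hrm : ‖b i‖ ≤ ‖β + q‖ := by
    have := cond2 i (fun j => -(c j))
    rwa [hdec] at this
  have hpyth : ‖β + q‖ ^ 2 = ‖β‖ ^ 2 + ‖q‖ ^ 2 := by
    rw [norm_add_sq_real, hβorth _ hqW, mul_zero, add_zero]
  -- bound on earlier basis vectors via the induction hypothesis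
  have hbound : ∀ j ∈ Finset.univ.filter (fun j : Fin n => (j : ℕ) < (i : ℕ)),
      ‖b j‖ ^ 2 ≤ lam ^ 2 := by
    intro j hj
    simp only [mem_filter, mem_univ, true_and] at hj
    have hjm : (j : ℕ) < m := him ▸ hj
    have hb1 : ‖b j‖ ≤ succMin L ((j : ℕ) + 1) := IH (j : ℕ) hjm (lt_trans hjm hm4) j rfl
    have hb2 : succMin L ((j : ℕ) + 1) ≤ lam := by
      rw [hlam, hL]
      exact succMin_mono' (latticeOf b) (by omega) (v ∘ Fin.castLE i.isLt)
        (fun k => hvmem _) (hvind.comp _ (Fin.castLE_injective _))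
    nlinarith [norm_nonneg (b j), succMin_nonneg' L ((j : ℕ) + 1)]
  have hcard : (Finset.univ.filter (fun j : Fin n => (j : ℕ) < (i : ℕ))).card = (i : ℕ) := by
    have : Finset.univ.filter (fun j : Fin n => (j : ℕ) < (i : ℕ)) = Finset.Iio i := by
      ext j
      simp only [mem_filter, mem_univ, true_and, Finset.mem_Iio]
      exact (Fin.lt_def).symm
    rw [this, Fin.card_Iio]
  have hsumb : ∑ j ∈ Finset.univ.filter (fun j : Fin n => (j : ℕ) < (i : ℕ)), ‖b j‖ ^ 2
      ≤ 3 * lam ^ 2 := by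
    calc ∑ j ∈ Finset.univ.filter (fun j : Fin n => (j : ℕ) < (i : ℕ)), ‖b j‖ ^ 2
        ≤ ∑ _j ∈ Finset.univ.filter (fun j : Fin n => (j : ℕ) < (i : ℕ)), lam ^ 2 :=
          Finset.sum_le_sum hbound
      _ = ((i : ℕ) : ℝ) * lam ^ 2 := by rw [Finset.sum_const, hcard, nsmul_eq_mul]
      _ ≤ 3 * lam ^ 2 := by
          apply mul_le_mul_of_nonneg_right _ (sq_nonneg lam)
          have : (i : ℕ) ≤ 3 := by omega
          exact_mod_cast this
  have final : ‖b i‖ ^ 2 ≤ lam ^ 2 := by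
    have h3 : ‖b i‖ ^ 2 ≤ ‖β + q‖ ^ 2 := by
      apply pow_le_pow_left₀ (norm_nonneg _) hrm
    rw [hpyth] at h3
    linarith [hc, hA, hsumb, h3]
  exact (pow_le_pow_iff_left₀ (norm_nonneg (b i)) hlam0 two_ne_zero).mp final

theorem stronglyReduced_first_four {n : ℕ} (b : Fin n → EuclideanSpace ℝ (Fin n))
    (hli : LinearIndependent ℝ b) (hsr : StronglyReduced b) (i : Fin n) (hi : (i : ℕ) < 4) :
    ‖b i‖ = succMin (latticeOf b) ((i : ℕ) + 1) := by
  obtain ⟨⟨v, x, hvind, hvmem, hvnorm, hvx, hxne, hx0⟩, cond2⟩ := hsr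
  apply le_antisymm
  · exact norm_le_succMin' b hli ⟨⟨v, x, hvind, hvmem, hvnorm, hvx, hxne, hx0⟩, cond2⟩
      (i : ℕ) hi i rfl
  · exact succMin_le_norm' b hli v x hvind hvmem hvnorm hvx hx0 i
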